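/- In an entrenchment frame, if α maxiconsistently infers β then ¬β ⪯ ¬α and also α → ¬β ⪯ ¬α. -/
import Mathlib


/-- A propositional language: a type of sentences with boolean connectives. -/
structure Lang (L : Type) where
  or : L → L → L
  and : L → L → L
  not : L → L
  imp : L → L → L
  bot : L
  top : L

/-- A classical valuation of the language: respects all connectives. -/
def Lang.Val {L : Type} (S : Lang L) (v : L → Prop) : Prop :=
  (∀ a b, v (S.or a b) ↔ v a ∨ v b) ∧
  (∀ a b, v (S.and a b) ↔ v a ∧ v b) ∧
  (∀ a, v (S.not a) ↔ ¬ v a) ∧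
  (∀ a b, v (S.imp a b) ↔ (v a → v b)) ∧
  ¬ v S.bot ∧ v S.top

/-- Classical consequence from a set of premises. -/
def Lang.SEnt {L : Type} (S : Lang L) (X : Set L) (b : L) : Prop :=
  ∀ v, S.Val v → (∀ a ∈ X, v a) → v b

/-- Classical consequence between single sentences: α ⊢ β. -/
def Lang.ent {L : Type} (S : Lang L) (a b : L) : Prop := S.SEnt {a} b

/-- Deductive closure. -/
def Lang.Cn {L : Type} (S : Lang L) (X : Set L) : Set L := {b | S.SEnt X b}

/-- Coh(α) = {β | ¬ (β ⪯ ¬α)}. -/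
def Coh {L : Type} (S : Lang L) (pr : L → L → Prop) (a : L) : Set L :=
  {b | ¬ pr b (S.not a)}

/-- The base of α: deductively closed subsets of Coh(α). -/
def Base {L : Type} (S : Lang L) (pr : L → L → Prop) (a : L) : Set (Set L) :=
  {U | U = S.Cn U ∧ U ⊆ Coh S pr a}

/-- The maximal base of α. -/
def MaxBase {L : Type} (S : Lang L) (pr : L → L → Prop) (a : L) : Set (Set L) :=
  {U | U ∈ Base S pr a ∧ ∀ U', U' = S.Cn U' → U ⊂ U' → U' ∉ Base S pr a}

/-- Maxiconsistent inference: α |~⪯ β. -/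
def MInf {L : Type} (S : Lang L) (pr : L → L → Prop) (a b : L) : Prop :=
  ∀ U ∈ MaxBase S pr a, b ∈ S.Cn (U ∪ {a})

open Set

lemma Stmt13.beq_of_iff {x y : Bool} (h : (x = true) ↔ (y = true)) : x = y := by
  cases x <;> cases y <;> simp_all

/-- The set of boolean valuations respecting the connectives is closed. -/
lemma Stmt13.val_isClosed {L : Type} (S : Lang L) :
    IsClosed {v : L → Bool | S.Val (fun c => v c = true)} := by
  have heq : {v : L → Bool | S.Val (fun c => v c = true)} =
      (⋂ (p : L × L), {v : L → Bool | v (S.or p.1 p.2) = (v p.1 || v p.2)}) ∩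
      ((⋂ (p : L × L), {v : L → Bool | v (S.and p.1 p.2) = (v p.1 && v p.2)}) ∩
      ((⋂ (x : L), {v : L → Bool | v (S.not x) = !(v x)}) ∩
      ((⋂ (p : L × L), {v : L → Bool | v (S.imp p.1 p.2) = (!(v p.1) || v p.2)}) ∩
      ({v : L → Bool | v S.bot = false} ∩ {v : L → Bool | v S.top = true})))) := by
    ext v
    constructor
    · rintro ⟨h1, h2, h3, h4, h5, h6⟩
      refine ⟨Set.mem_iInter.2 fun p => Stmt13.beq_of_iff ?_,
        Set.mem_iInter.2 fun p => Stmt13.beq_of_iff ?_,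
        Set.mem_iInter.2 fun x => Stmt13.beq_of_iff ?_,
        Set.mem_iInter.2 fun p => Stmt13.beq_of_iff ?_, ?_, ?_⟩
      · simpa using h1 p.1 p.2
      · simpa using h2 p.1 p.2
      · simpa using h3 x
      · have := (h4 p.1 p.2).trans (show ((v p.1 = true) → (v p.2 = true)) ↔
          ((!(v p.1) || v p.2) = true) by cases hp : v p.1 <;> simp [hp])
        exact this
      · exact Stmt13.beq_of_iff (by simpa using h5)
      · exact h6
    · rintro ⟨H1, H2, H3, H4, H5, H6⟩
      refine ⟨fun x y => ?_, fun x y => ?_, fun x => ?_, fun x y => ?_, ?_, ?_⟩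
      · show v (S.or x y) = true ↔ (v x = true ∨ v y = true)
        rw [Set.mem_iInter.1 H1 (x, y)]; simp
      · show v (S.and x y) = true ↔ (v x = true ∧ v y = true)
        rw [Set.mem_iInter.1 H2 (x, y)]; simp
      · show v (S.not x) = true ↔ ¬ (v x = true)
        rw [Set.mem_iInter.1 H3 x]; simp
      · show v (S.imp x y) = true ↔ ((v x = true) → (v y = true))
        rw [Set.mem_iInter.1 H4 (x, y)]; cases hp : v x <;> simp [hp]
      · show ¬ (v S.bot = true)
        rw [H5]; simp
      · exact H6
  rw [heq]
  have hc2 : ∀ x : L, Continuous (fun v : L → Bool => v x) := fun x => continuous_apply x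
  refine IsClosed.inter (isClosed_iInter fun p => isClosed_eq (hc2 _) ?_)
    (IsClosed.inter (isClosed_iInter fun p => isClosed_eq (hc2 _) ?_)
    (IsClosed.inter (isClosed_iInter fun x => isClosed_eq (hc2 _) ?_)
    (IsClosed.inter (isClosed_iInter fun p => isClosed_eq (hc2 _) ?_)
    (IsClosed.inter (isClosed_eq (hc2 _) continuous_const)
      (isClosed_eq (hc2 _) continuous_const)))))
  · exact (continuous_of_discreteTopology
      (f := fun q : Bool × Bool => q.1 || q.2)).comp ((hc2 p.1).prodMk (hc2 p.2))
  · exact (continuous_of_discreteTopology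
      (f := fun q : Bool × Bool => q.1 && q.2)).comp ((hc2 p.1).prodMk (hc2 p.2))
  · exact (continuous_of_discreteTopology (f := fun q : Bool => !q)).comp (hc2 x)
  · exact (continuous_of_discreteTopology
      (f := fun q : Bool × Bool => !q.1 || q.2)).comp ((hc2 p.1).prodMk (hc2 p.2))

/-- Compactness: finitely satisfiable implies satisfiable. -/
lemma Stmt13.finsat_sat {L : Type} (S : Lang L) (X : Set L)
    (hfin : ∀ u : Finset L, ↑u ⊆ X → ∃ v, S.Val v ∧ ∀ γ ∈ u, v γ) :
    ∃ v, S.Val v ∧ ∀ γ ∈ X, v γ := by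
  classical
  set V : Set (L → Bool) := {v : L → Bool | S.Val (fun c => v c = true)} with hV
  rcases Set.eq_empty_or_nonempty (V ∩ ⋂ (γ : X), {v : L → Bool | v (γ : L) = true}) with
    hemp | ⟨v, hv1, hv2⟩
  · exfalso
    obtain ⟨u, hu⟩ := (IsClosed.isCompact (Stmt13.val_isClosed S)).elim_finite_subfamily_closed
      (fun γ : X => {v : L → Bool | v (γ : L) = true})
      (fun γ => isClosed_eq (continuous_apply _) continuous_const) hemp
    obtain ⟨w, hw, hwu⟩ := hfin (u.image (fun γ : X => (γ : L)))
      (by intro c hc; simp only [Finset.coe_image, Set.mem_image] at hc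
          obtain ⟨γ, _, rfl⟩ := hc; exact γ.2)
    have hwb : (fun c => decide (w c)) ∈ V ∩ ⋂ γ ∈ u, {v : L → Bool | v (γ : L) = true} := by
      constructor
      · have he : (fun c => (decide (w c) : Bool) = true) = w := by
          funext c; exact propext (by simp)
        show S.Val (fun c => (fun c => (decide (w c) : Bool)) c = true)
        simpa [he] using hw
      · simp only [Set.mem_iInter, Set.mem_setOf_eq]
        intro γ hγ
        simp only [decide_eq_true_eq]
        exact hwu _ (Finset.mem_image_of_mem _ hγ)
    rw [hu] at hwb
    exact hwb
  · refine ⟨fun c => v c = true, hv1, fun γ hγ => ?_⟩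
    have := Set.mem_iInter.1 hv2 ⟨γ, hγ⟩
    exact this

/-- Entailment is finitary. -/
lemma Stmt13.sent_fin {L : Type} (S : Lang L) {X : Set L} {b : L} (h : S.SEnt X b) :
    ∃ u : Finset L, ↑u ⊆ X ∧ S.SEnt ↑u b := by
  classical
  by_contra hcon
  push_neg at hcon
  have hcon' : ∀ u : Finset L, ↑u ⊆ X →
      ∃ v, S.Val v ∧ (∀ γ ∈ (u : Set L), v γ) ∧ ¬ v b := by
    intro u hu
    by_contra hc
    push_neg at hc
    exact hcon u hu (fun v hv hsat => hc v hv hsat)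
  obtain ⟨v, hval, hvsat⟩ := Stmt13.finsat_sat S (X ∪ {S.not b}) (by
    intro u hu
    have h1 : ↑(u.filter (fun γ => γ ∈ X)) ⊆ X := by
      intro c hc; simp only [Finset.coe_filter, Set.mem_setOf_eq] at hc; exact hc.2
    obtain ⟨v, hval, hvu, hvb⟩ := hcon' (u.filter (fun γ => γ ∈ X)) h1
    refine ⟨v, hval, fun γ hγ => ?_⟩
    rcases hu hγ with hγX | hγb
    · exact hvu γ (by simp only [Finset.coe_filter, Set.mem_setOf_eq]; exact ⟨hγ, hγX⟩)
    · rw [Set.mem_singleton_iff] at hγb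
      subst hγb
      exact (hval.2.2.1 b).2 hvb)
  have hX : ∀ c ∈ X, v c := fun c hc => hvsat c (Or.inl hc)
  have hb : v b := h v hval hX
  have hnb : v (S.not b) := hvsat _ (Or.inr rfl)
  exact (hval.2.2.1 b).1 hnb hb

lemma Stmt13.sent_mono {L : Type} (S : Lang L) {X Y : Set L} {c : L}
    (hXY : X ⊆ Y) (h : S.SEnt X c) : S.SEnt Y c :=
  fun v hv hsat => h v hv (fun d hd => hsat d (hXY hd))

lemma Stmt13.main {L : Type} (S : Lang L) (pr : L → L → Prop)
    (hrefl : ∀ a, pr a a)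
    (hlm : ∀ a b c, S.ent a b → pr b c → pr a c)
    (a b g : L) (h : MInf S pr a b)
    (hg : ∀ v, S.Val v → v g → v a → ¬ v b) :
    pr g (S.not a) := by
  classical
  by_contra hng
  set Z : Set (Set L) := {U | U = S.Cn U ∧ U ⊆ Coh S pr a ∧ g ∈ U} with hZ
  -- the starting point
  have hU0 : S.Cn {g} ∈ Z := by
    refine ⟨?_, ?_, ?_⟩
    · apply Set.Subset.antisymm
      · intro d hd v hv hsat
        exact hsat d hd
      · intro d hd v hv hsat
        exact hd v hv (fun c hc => hc v hv hsat)
    · intro d hd hpd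
      exact hng (hlm g d (S.not a) hd hpd)
    · intro v hv hsat
      exact hsat g rfl
  -- Zorn's lemma
  obtain ⟨M, hM0, hMmax⟩ := zorn_subset_nonempty Z (by
    intro c hcZ hchain hcne
    refine ⟨⋃₀ c, ⟨?_, ?_, ?_⟩, fun s hs => Set.subset_sUnion_of_mem hs⟩
    · apply Set.Subset.antisymm
      · intro d hd v hv hsat
        exact hsat d hd
      · intro d hd
        obtain ⟨u, huc, hu⟩ := Stmt13.sent_fin S hd
        obtain ⟨U, hUc, hufU⟩ := DirectedOn.exists_mem_subset_of_finset_subset_biUnion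
          hcne (hchain.directedOn) (show (↑u : Set L) ⊆ ⋃ i ∈ c, i by rwa [Set.sUnion_eq_biUnion] at huc)
        have hdU : d ∈ S.Cn U := Stmt13.sent_mono S hufU hu
        rw [← (hcZ hUc).1] at hdU
        exact Set.mem_sUnion_of_mem hdU hUc
    · intro d hd
      obtain ⟨U, hUc, hdU⟩ := hd
      exact (hcZ hUc).2.1 hdU
    · obtain ⟨U, hUc⟩ := hcne
      exact Set.mem_sUnion_of_mem (hcZ hUc).2.2 hUc) (S.Cn {g}) hU0
  obtain ⟨hMcn, hMcoh, hgM⟩ := hMmax.1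
  -- M is a maximal base
  have hMmb : M ∈ MaxBase S pr a := by
    refine ⟨⟨hMcn, hMcoh⟩, fun U' hU'cn hMU' hU'B => ?_⟩
    have hU'Z : U' ∈ Z := ⟨hU'cn, hU'B.2, hMU'.1 hgM⟩
    exact hMU'.ne (Set.Subset.antisymm hMU'.1 (hMmax.2 hU'Z hMU'.1))
  have hb : b ∈ S.Cn (M ∪ {a}) := h M hMmb
  -- derive ¬a ∈ M
  have hna : S.not a ∈ M := by
    rw [hMcn]
    intro v hv hsat
    rw [hv.2.2.1 a]
    intro hva
    have hsat' : ∀ c ∈ M ∪ {a}, v c := by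
      rintro c (hc | hc)
      · exact hsat c hc
      · rw [hc]; exact hva
    exact hg v hv (hsat g hgM) hva (hb v hv hsat')
  exact (hMcoh hna) (hrefl (S.not a))

/-- If α maxiconsistently infers β then ¬β ⪯ ¬α and α → ¬β ⪯ ¬α. -/
theorem stmt13 {L : Type} (S : Lang L) (pr : L → L → Prop)
    (hrefl : ∀ a, pr a a)
    (hlm : ∀ a b c, S.ent a b → pr b c → pr a c)
    (hle : ∀ a b c, S.ent a b → S.ent b a → (pr c a ↔ pr c b))
    (a b : L) (h : MInf S pr a b) :
    pr (S.not b) (S.not a) ∧ pr (S.imp a (S.not b)) (S.not a) := by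
  constructor
  · exact Stmt13.main S pr hrefl hlm a b (S.not b) h
      (fun v hv hg _ hb => ((hv.2.2.1 b).1 hg) hb)
  · exact Stmt13.main S pr hrefl hlm a b (S.imp a (S.not b)) h
      (fun v hv hg hva hb => (hv.2.2.1 b).1 ((hv.2.2.2.1 a (S.not b)).1 hg hva) hb)
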